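/- arXiv:1405.7863 — 6 statements merged into one kernel-verified Lean document; each statement's English description precedes it below -/
import Mathlib

section
/- Let A = (A, m_A, u_A, δ_A, ε_A) and B = (B, m_B, u_B, δ_B, ε_B) be Frobenius algebras in a braided monoidal category C. Then the braided product A ×⁺ B = (A ⊗ B, m_×, u_×, δ_×, ε_×) is again a Frobenius algebra: m_× is associative with two-sided unit u_×, δ_× is coassociative with counit ε_×, and the Frobenius law holds for the pair (m_×, δ_×). (This is the statement that the braided product of two Q-systems is a Q-system.) -/
open CategoryTheory MonoidalCategory

/-- A Frobenius algebra (the categorical content of a Q-system) in a monoidal category: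
an object which is simultaneously a monoid and a comonoid, satisfying the Frobenius law. -/
structure FrobeniusAlgebra (C : Type*) [Category C] [MonoidalCategory C] where
  X : C
  mul : X ⊗ X ⟶ X
  one : 𝟙_ C ⟶ X
  comul : X ⟶ X ⊗ X
  counit : X ⟶ 𝟙_ C
  mul_assoc' : (mul ⊗ₘ 𝟙 X) ≫ mul = (α_ X X X).hom ≫ (𝟙 X ⊗ₘ mul) ≫ mul
  one_mul' : (one ⊗ₘ 𝟙 X) ≫ mul = (λ_ X).hom
  mul_one' : (𝟙 X ⊗ₘ one) ≫ mul = (ρ_ X).hom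
  comul_coassoc' : comul ≫ (comul ⊗ₘ 𝟙 X) ≫ (α_ X X X).hom = comul ≫ (𝟙 X ⊗ₘ comul)
  counit_comul' : comul ≫ (counit ⊗ₘ 𝟙 X) = (λ_ X).inv
  comul_counit' : comul ≫ (𝟙 X ⊗ₘ counit) = (ρ_ X).inv
  frobenius_left' : (comul ⊗ₘ 𝟙 X) ≫ (α_ X X X).hom ≫ (𝟙 X ⊗ₘ mul) = mul ≫ comul
  frobenius_right' : mul ≫ comul = (𝟙 X ⊗ₘ comul) ≫ (α_ X X X).inv ≫ (mul ⊗ₘ 𝟙 X)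

variable {C : Type*} [Category C] [MonoidalCategory C] [BraidedCategory C]

/-- The multiplication of the braided product `A ×⁺ B`: rebracket, apply
`id_A ⊗ (β_{A,B})⁻¹ ⊗ id_B` to the middle factors `B ⊗ A`, rebracket, apply `m_A ⊗ m_B`. -/
noncomputable def bpMul (A B : FrobeniusAlgebra C) :
    (A.X ⊗ B.X) ⊗ (A.X ⊗ B.X) ⟶ A.X ⊗ B.X :=
  (α_ A.X B.X (A.X ⊗ B.X)).hom ≫
    (A.X ◁ (α_ B.X A.X B.X).inv) ≫
    (A.X ◁ ((β_ A.X B.X).inv ▷ B.X)) ≫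
    (A.X ◁ (α_ A.X B.X B.X).hom) ≫
    (α_ A.X A.X (B.X ⊗ B.X)).inv ≫ (A.mul ⊗ₘ B.mul)

/-- The unit of the braided product `A ×⁺ B`. -/
noncomputable def bpOne (A B : FrobeniusAlgebra C) : 𝟙_ C ⟶ A.X ⊗ B.X :=
  (λ_ (𝟙_ C)).inv ≫ (A.one ⊗ₘ B.one)

/-- The comultiplication of the braided product `A ×⁺ B`: apply `δ_A ⊗ δ_B`, rebracket,
apply `id_A ⊗ β_{A,B} ⊗ id_B` to the middle factors `A ⊗ B`, and rebracket. -/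
noncomputable def bpComul (A B : FrobeniusAlgebra C) :
    A.X ⊗ B.X ⟶ (A.X ⊗ B.X) ⊗ (A.X ⊗ B.X) :=
  (A.comul ⊗ₘ B.comul) ≫
    (α_ A.X A.X (B.X ⊗ B.X)).hom ≫
    (A.X ◁ (α_ A.X B.X B.X).inv) ≫
    (A.X ◁ ((β_ A.X B.X).hom ▷ B.X)) ≫
    (A.X ◁ (α_ B.X A.X B.X).hom) ≫
    (α_ A.X B.X (A.X ⊗ B.X)).inv

/-- The counit of the braided product `A ×⁺ B`. -/
noncomputable def bpCounit (A B : FrobeniusAlgebra C) : A.X ⊗ B.X ⟶ 𝟙_ C :=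
  (A.counit ⊗ₘ B.counit) ≫ (λ_ (𝟙_ C)).hom

namespace BraidedProductAux

open MonoidalCategory BraidedCategory

variable {C : Type*} [Category C] [MonoidalCategory C] [BraidedCategory C]

/-- The underlying monoid object of a Frobenius algebra. -/
noncomputable def toMon (A : FrobeniusAlgebra C) : MonObj A.X where
  one := A.one
  mul := A.mul
  one_mul := by rw [← tensorHom_id]; exact A.one_mul'
  mul_one := by rw [← id_tensorHom]; exact A.mul_one'
  mul_assoc := by rw [← tensorHom_id, ← id_tensorHom]; exact A.mul_assoc'

/-- The underlying comonoid object of a Frobenius algebra. -/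
noncomputable def toComon (A : FrobeniusAlgebra C) : ComonObj A.X where
  counit := A.counit
  comul := A.comul
  counit_comul := by rw [← tensorHom_id]; exact A.counit_comul'
  comul_counit := by rw [← id_tensorHom]; exact A.comul_counit'
  comul_assoc := by rw [← id_tensorHom, ← tensorHom_id]; exact A.comul_coassoc'.symm

lemma toMon_mul (A : FrobeniusAlgebra C) : @MonObj.mul C _ _ A.X (toMon A) = A.mul := rfl

lemma toMon_one (A : FrobeniusAlgebra C) : @MonObj.one C _ _ A.X (toMon A) = A.one := rfl

lemma toComon_comul (A : FrobeniusAlgebra C) :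
    @ComonObj.comul C _ _ A.X (toComon A) = A.comul := rfl

lemma toComon_counit (A : FrobeniusAlgebra C) :
    @ComonObj.counit C _ _ A.X (toComon A) = A.counit := rfl

lemma bpMul_eq (A B : FrobeniusAlgebra C) :
    bpMul A B = @tensorμ C _ _ (reverseBraiding C) A.X B.X A.X B.X ≫ (A.mul ⊗ₘ B.mul) := by
  simp [bpMul, tensorμ, reverseBraiding]; rfl

lemma bpMul_eq' (A B : FrobeniusAlgebra C) :
    bpMul A B = tensorδ A.X A.X B.X B.X ≫ (A.mul ⊗ₘ B.mul) := by
  simp [bpMul, tensorδ]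

lemma bpComul_eq (A B : FrobeniusAlgebra C) :
    bpComul A B = (A.comul ⊗ₘ B.comul) ≫ tensorμ A.X A.X B.X B.X := by
  simp [bpComul, tensorμ]


lemma bp_mul_assoc (A B : FrobeniusAlgebra C) :
    (bpMul A B ⊗ₘ 𝟙 (A.X ⊗ B.X)) ≫ bpMul A B =
      (α_ (A.X ⊗ B.X) (A.X ⊗ B.X) (A.X ⊗ B.X)).hom ≫
        (𝟙 (A.X ⊗ B.X) ⊗ₘ bpMul A B) ≫ bpMul A B := by
  have h := @MonObj.Mon_tensor_mul_assoc C _ _ (reverseBraiding C) A.X B.X (toMon A) (toMon B)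
  rw [tensorHom_id, id_tensorHom, bpMul_eq]
  simpa [toMon, toMon_mul, toMon_one] using h

lemma bp_one_mul (A B : FrobeniusAlgebra C) :
    (bpOne A B ⊗ₘ 𝟙 (A.X ⊗ B.X)) ≫ bpMul A B = (λ_ (A.X ⊗ B.X)).hom := by
  have h := @MonObj.Mon_tensor_one_mul C _ _ (reverseBraiding C) A.X B.X (toMon A) (toMon B)
  rw [tensorHom_id, bpMul_eq, bpOne]
  simpa [toMon, toMon_mul, toMon_one] using h

lemma bp_mul_one (A B : FrobeniusAlgebra C) :
    (𝟙 (A.X ⊗ B.X) ⊗ₘ bpOne A B) ≫ bpMul A B = (ρ_ (A.X ⊗ B.X)).hom := by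
  have h := @MonObj.Mon_tensor_mul_one C _ _ (reverseBraiding C) A.X B.X (toMon A) (toMon B)
  rw [id_tensorHom, bpMul_eq, bpOne]
  simpa [toMon, toMon_mul, toMon_one] using h

lemma bp_comul_assoc (A B : FrobeniusAlgebra C) :
    bpComul A B ≫ (bpComul A B ⊗ₘ 𝟙 (A.X ⊗ B.X)) ≫
        (α_ (A.X ⊗ B.X) (A.X ⊗ B.X) (A.X ⊗ B.X)).hom =
      bpComul A B ≫ (𝟙 (A.X ⊗ B.X) ⊗ₘ bpComul A B) := by
  letI := toComon A; letI := toComon B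
  have h := ComonObj.comul_assoc (A.X ⊗ B.X)
  rw [Comon.tensorObj_comul] at h
  rw [tensorHom_id, id_tensorHom, bpComul_eq]
  simpa +zetaDelta [toComon, toComon_comul, toComon_counit] using h.symm

lemma bp_counit_comul (A B : FrobeniusAlgebra C) :
    bpComul A B ≫ (bpCounit A B ⊗ₘ 𝟙 (A.X ⊗ B.X)) = (λ_ (A.X ⊗ B.X)).inv := by
  letI := toComon A; letI := toComon B
  have h := ComonObj.counit_comul (A.X ⊗ B.X)
  rw [Comon.tensorObj_comul] at h
  rw [tensorHom_id, bpComul_eq, bpCounit]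
  simpa +zetaDelta [toComon, toComon_comul, toComon_counit, Comon.tensorObj_counit] using h

lemma bp_comul_counit (A B : FrobeniusAlgebra C) :
    bpComul A B ≫ (𝟙 (A.X ⊗ B.X) ⊗ₘ bpCounit A B) = (ρ_ (A.X ⊗ B.X)).inv := by
  letI := toComon A; letI := toComon B
  have h := ComonObj.comul_counit (A.X ⊗ B.X)
  rw [Comon.tensorObj_comul] at h
  rw [id_tensorHom, bpComul_eq, bpCounit]
  simpa +zetaDelta [toComon, toComon_comul, toComon_counit, Comon.tensorObj_counit] using h


lemma frobL (A : FrobeniusAlgebra C) :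
    A.mul ≫ A.comul = (A.comul ▷ A.X) ≫ (α_ A.X A.X A.X).hom ≫ (A.X ◁ A.mul) := by
  rw [← A.frobenius_left', tensorHom_id, id_tensorHom]

lemma frobR (A : FrobeniusAlgebra C) :
    A.mul ≫ A.comul = (A.X ◁ A.comul) ≫ (α_ A.X A.X A.X).inv ≫ (A.mul ▷ A.X) := by
  rw [A.frobenius_right', tensorHom_id, id_tensorHom]

set_option maxHeartbeats 2000000 in
lemma bp_frobenius_left (A B : FrobeniusAlgebra C) :
    (bpComul A B ▷ (A.X ⊗ B.X)) ≫ (α_ (A.X ⊗ B.X) (A.X ⊗ B.X) (A.X ⊗ B.X)).hom ≫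
      ((A.X ⊗ B.X) ◁ bpMul A B) = bpMul A B ≫ bpComul A B := by
  calc
    (bpComul A B ▷ (A.X ⊗ B.X)) ≫ (α_ (A.X ⊗ B.X) (A.X ⊗ B.X) (A.X ⊗ B.X)).hom ≫
      ((A.X ⊗ B.X) ◁ bpMul A B)
      = 𝟙 ((A.X ⊗ B.X) ⊗ (A.X ⊗ B.X)) ⊗≫
        A.comul ▷ (B.X ⊗ (A.X ⊗ B.X)) ⊗≫
        (A.X ⊗ A.X) ◁ B.comul ▷ (A.X ⊗ B.X) ⊗≫
        A.X ◁ ((β_ A.X B.X).hom ▷ (B.X ⊗ A.X) ≫ (B.X ⊗ A.X) ◁ (β_ A.X B.X).inv) ▷ B.X ⊗≫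
        (A.X ⊗ B.X) ◁ A.mul ▷ (B.X ⊗ B.X) ⊗≫
        (A.X ⊗ (B.X ⊗ A.X)) ◁ B.mul ⊗≫ 𝟙 ((A.X ⊗ B.X) ⊗ (A.X ⊗ B.X)) := by
        rw [bpComul_eq, bpMul_eq']; dsimp only [tensorμ, tensorδ]
        simp only [MonoidalCategory.tensorHom_def]; monoidal
    _ = 𝟙 ((A.X ⊗ B.X) ⊗ (A.X ⊗ B.X)) ⊗≫
        A.comul ▷ (B.X ⊗ (A.X ⊗ B.X)) ⊗≫
        (A.X ⊗ A.X) ◁ B.comul ▷ (A.X ⊗ B.X) ⊗≫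
        A.X ◁ ((A.X ⊗ B.X) ◁ (β_ A.X B.X).inv ≫ (β_ A.X B.X).hom ▷ (A.X ⊗ B.X)) ▷ B.X ⊗≫
        (A.X ⊗ B.X) ◁ A.mul ▷ (B.X ⊗ B.X) ⊗≫
        (A.X ⊗ (B.X ⊗ A.X)) ◁ B.mul ⊗≫ 𝟙 ((A.X ⊗ B.X) ⊗ (A.X ⊗ B.X)) := by
        rw [whisker_exchange]
    _ = 𝟙 ((A.X ⊗ B.X) ⊗ (A.X ⊗ B.X)) ⊗≫
        A.comul ▷ (B.X ⊗ (A.X ⊗ B.X)) ⊗≫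
        (A.X ⊗ A.X) ◁ B.comul ▷ (A.X ⊗ B.X) ⊗≫
        ((A.X ⊗ A.X) ⊗ B.X) ◁ (β_ A.X B.X).inv ▷ B.X ⊗≫
        (A.X ⊗ A.X) ◁ (((β_ A.X B.X).inv ≫ (β_ A.X B.X).hom) ▷ (B.X ⊗ B.X)) ⊗≫
        A.X ◁ ((β_ A.X B.X).hom ▷ A.X) ▷ (B.X ⊗ B.X) ⊗≫
        (A.X ⊗ B.X) ◁ A.mul ▷ (B.X ⊗ B.X) ⊗≫
        (A.X ⊗ (B.X ⊗ A.X)) ◁ B.mul ⊗≫ 𝟙 ((A.X ⊗ B.X) ⊗ (A.X ⊗ B.X)) := by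
        rw [Iso.inv_hom_id]; monoidal
    _ = 𝟙 ((A.X ⊗ B.X) ⊗ (A.X ⊗ B.X)) ⊗≫
        A.comul ▷ (B.X ⊗ (A.X ⊗ B.X)) ⊗≫
        (A.X ⊗ A.X) ◁ B.comul ▷ (A.X ⊗ B.X) ⊗≫
        ((A.X ⊗ A.X) ⊗ B.X) ◁ (β_ A.X B.X).inv ▷ B.X ⊗≫
        (A.X ⊗ A.X) ◁ (β_ A.X B.X).inv ▷ (B.X ⊗ B.X) ⊗≫
        A.X ◁ ((β_ (A.X ⊗ A.X) B.X).hom ≫ B.X ◁ A.mul) ▷ (B.X ⊗ B.X) ⊗≫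
        (A.X ⊗ (B.X ⊗ A.X)) ◁ B.mul ⊗≫ 𝟙 ((A.X ⊗ B.X) ⊗ (A.X ⊗ B.X)) := by
        rw [braiding_tensor_left_hom]; monoidal
    _ = 𝟙 ((A.X ⊗ B.X) ⊗ (A.X ⊗ B.X)) ⊗≫
        A.comul ▷ (B.X ⊗ (A.X ⊗ B.X)) ⊗≫
        (A.X ⊗ A.X) ◁ B.comul ▷ (A.X ⊗ B.X) ⊗≫
        ((A.X ⊗ A.X) ⊗ B.X) ◁ (β_ A.X B.X).inv ▷ B.X ⊗≫
        (A.X ⊗ A.X) ◁ (β_ A.X B.X).inv ▷ (B.X ⊗ B.X) ⊗≫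
        A.X ◁ (A.mul ▷ B.X) ▷ (B.X ⊗ B.X) ⊗≫
        A.X ◁ ((β_ A.X B.X).hom ▷ (B.X ⊗ B.X) ≫ (B.X ⊗ A.X) ◁ B.mul) ⊗≫
        𝟙 ((A.X ⊗ B.X) ⊗ (A.X ⊗ B.X)) := by
        rw [← braiding_naturality_left]; monoidal
    _ = 𝟙 ((A.X ⊗ B.X) ⊗ (A.X ⊗ B.X)) ⊗≫
        A.comul ▷ (B.X ⊗ (A.X ⊗ B.X)) ⊗≫
        (A.X ⊗ A.X) ◁ (B.comul ▷ A.X ≫ (β_ A.X (B.X ⊗ B.X)).inv) ▷ B.X ⊗≫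
        A.X ◁ A.mul ▷ (B.X ⊗ (B.X ⊗ B.X)) ⊗≫
        (A.X ⊗ (A.X ⊗ B.X)) ◁ B.mul ⊗≫
        A.X ◁ (β_ A.X B.X).hom ▷ B.X ⊗≫ 𝟙 ((A.X ⊗ B.X) ⊗ (A.X ⊗ B.X)) := by
        rw [← whisker_exchange, braiding_tensor_right_inv]; monoidal
    _ = 𝟙 ((A.X ⊗ B.X) ⊗ (A.X ⊗ B.X)) ⊗≫
        (A.comul ▷ (B.X ⊗ A.X) ≫ (A.X ⊗ A.X) ◁ (β_ A.X B.X).inv) ▷ B.X ⊗≫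
        ((A.X ⊗ A.X) ⊗ A.X) ◁ B.comul ▷ B.X ⊗≫
        A.X ◁ A.mul ▷ (B.X ⊗ (B.X ⊗ B.X)) ⊗≫
        (A.X ⊗ (A.X ⊗ B.X)) ◁ B.mul ⊗≫
        A.X ◁ (β_ A.X B.X).hom ▷ B.X ⊗≫ 𝟙 ((A.X ⊗ B.X) ⊗ (A.X ⊗ B.X)) := by
        rw [braiding_inv_naturality_left]; monoidal
    _ = 𝟙 ((A.X ⊗ B.X) ⊗ (A.X ⊗ B.X)) ⊗≫
        A.X ◁ (β_ A.X B.X).inv ▷ B.X ⊗≫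
        A.comul ▷ (A.X ⊗ (B.X ⊗ B.X)) ⊗≫
        ((A.X ⊗ A.X) ⊗ A.X) ◁ B.comul ▷ B.X ⊗≫
        A.X ◁ A.mul ▷ (B.X ⊗ (B.X ⊗ B.X)) ⊗≫
        (A.X ⊗ (A.X ⊗ B.X)) ◁ B.mul ⊗≫
        A.X ◁ (β_ A.X B.X).hom ▷ B.X ⊗≫ 𝟙 ((A.X ⊗ B.X) ⊗ (A.X ⊗ B.X)) := by
        rw [← whisker_exchange]; monoidal
    _ = bpMul A B ≫ bpComul A B := by
        rw [bpMul_eq', bpComul_eq]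
        slice_rhs 2 3 => rw [tensorHom_comp_tensorHom]
        rw [frobL A, frobL B, ← tensorHom_comp_tensorHom, ← tensorHom_comp_tensorHom]
        dsimp only [tensorμ, tensorδ]
        simp only [MonoidalCategory.tensorHom_def, Category.assoc]
        monoidal


set_option maxHeartbeats 2000000 in
lemma bp_frobenius_right (A B : FrobeniusAlgebra C) :
    ((A.X ⊗ B.X) ◁ bpComul A B) ≫ (α_ (A.X ⊗ B.X) (A.X ⊗ B.X) (A.X ⊗ B.X)).inv ≫
      (bpMul A B ▷ (A.X ⊗ B.X)) = bpMul A B ≫ bpComul A B := by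
  calc
    ((A.X ⊗ B.X) ◁ bpComul A B) ≫ (α_ (A.X ⊗ B.X) (A.X ⊗ B.X) (A.X ⊗ B.X)).inv ≫
      (bpMul A B ▷ (A.X ⊗ B.X))
      = 𝟙 ((A.X ⊗ B.X) ⊗ (A.X ⊗ B.X)) ⊗≫
        (A.X ⊗ B.X) ◁ A.comul ▷ B.X ⊗≫
        ((A.X ⊗ B.X) ⊗ (A.X ⊗ A.X)) ◁ B.comul ⊗≫
        A.X ◁ ((B.X ⊗ A.X) ◁ (β_ A.X B.X).hom ≫ (β_ A.X B.X).inv ▷ (B.X ⊗ A.X)) ▷ B.X ⊗≫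
        A.mul ▷ ((B.X ⊗ B.X) ⊗ (A.X ⊗ B.X)) ⊗≫
        A.X ◁ B.mul ▷ (A.X ⊗ B.X) ⊗≫ 𝟙 ((A.X ⊗ B.X) ⊗ (A.X ⊗ B.X)) := by
        rw [bpComul_eq, bpMul_eq']; dsimp only [tensorμ, tensorδ]
        simp only [MonoidalCategory.tensorHom_def]; monoidal
    _ = 𝟙 ((A.X ⊗ B.X) ⊗ (A.X ⊗ B.X)) ⊗≫
        (A.X ⊗ B.X) ◁ A.comul ▷ B.X ⊗≫
        ((A.X ⊗ B.X) ⊗ (A.X ⊗ A.X)) ◁ B.comul ⊗≫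
        A.X ◁ (β_ A.X B.X).inv ▷ (A.X ⊗ (B.X ⊗ B.X)) ⊗≫
        (((A.X ⊗ A.X) ⊗ B.X) ◁ (β_ A.X B.X).hom ≫ (A.mul ▷ B.X) ▷ (B.X ⊗ A.X)) ▷ B.X ⊗≫
        A.X ◁ B.mul ▷ (A.X ⊗ B.X) ⊗≫ 𝟙 ((A.X ⊗ B.X) ⊗ (A.X ⊗ B.X)) := by
        rw [whisker_exchange]; monoidal
    _ = 𝟙 ((A.X ⊗ B.X) ⊗ (A.X ⊗ B.X)) ⊗≫
        (A.X ⊗ B.X) ◁ A.comul ▷ B.X ⊗≫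
        ((A.X ⊗ B.X) ⊗ (A.X ⊗ A.X)) ◁ B.comul ⊗≫
        A.X ◁ (β_ A.X B.X).inv ▷ (A.X ⊗ (B.X ⊗ B.X)) ⊗≫
        A.mul ▷ (B.X ⊗ (A.X ⊗ (B.X ⊗ B.X))) ⊗≫
        (A.X ⊗ B.X) ◁ (β_ A.X B.X).hom ▷ B.X ⊗≫
        A.X ◁ B.mul ▷ (A.X ⊗ B.X) ⊗≫ 𝟙 ((A.X ⊗ B.X) ⊗ (A.X ⊗ B.X)) := by
        rw [whisker_exchange]; monoidal
    _ = 𝟙 ((A.X ⊗ B.X) ⊗ (A.X ⊗ B.X)) ⊗≫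
        (A.X ⊗ B.X) ◁ A.comul ▷ B.X ⊗≫
        ((A.X ⊗ B.X) ⊗ (A.X ⊗ A.X)) ◁ B.comul ⊗≫
        A.X ◁ (β_ A.X B.X).inv ▷ (A.X ⊗ (B.X ⊗ B.X)) ⊗≫
        A.mul ▷ (B.X ⊗ (A.X ⊗ (B.X ⊗ B.X))) ⊗≫
        A.X ◁ (((β_ A.X B.X).inv ≫ (β_ A.X B.X).hom) ▷ (B.X ⊗ B.X)) ⊗≫
        (A.X ⊗ B.X) ◁ (β_ A.X B.X).hom ▷ B.X ⊗≫
        A.X ◁ B.mul ▷ (A.X ⊗ B.X) ⊗≫ 𝟙 ((A.X ⊗ B.X) ⊗ (A.X ⊗ B.X)) := by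
        rw [Iso.inv_hom_id]; monoidal
    _ = 𝟙 ((A.X ⊗ B.X) ⊗ (A.X ⊗ B.X)) ⊗≫
        (A.X ⊗ B.X) ◁ A.comul ▷ B.X ⊗≫
        ((A.X ⊗ B.X) ⊗ (A.X ⊗ A.X)) ◁ B.comul ⊗≫
        A.X ◁ (β_ A.X B.X).inv ▷ (A.X ⊗ (B.X ⊗ B.X)) ⊗≫
        A.mul ▷ (B.X ⊗ (A.X ⊗ (B.X ⊗ B.X))) ⊗≫
        A.X ◁ (β_ A.X B.X).inv ▷ (B.X ⊗ B.X) ⊗≫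
        A.X ◁ ((β_ A.X (B.X ⊗ B.X)).hom ≫ B.mul ▷ A.X) ▷ B.X ⊗≫
        𝟙 ((A.X ⊗ B.X) ⊗ (A.X ⊗ B.X)) := by
        rw [braiding_tensor_right_hom]; monoidal
    _ = 𝟙 ((A.X ⊗ B.X) ⊗ (A.X ⊗ B.X)) ⊗≫
        (A.X ⊗ B.X) ◁ A.comul ▷ B.X ⊗≫
        ((A.X ⊗ B.X) ⊗ (A.X ⊗ A.X)) ◁ B.comul ⊗≫
        A.X ◁ (β_ A.X B.X).inv ▷ (A.X ⊗ (B.X ⊗ B.X)) ⊗≫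
        (A.mul ▷ (B.X ⊗ A.X) ≫ A.X ◁ (β_ A.X B.X).inv) ▷ (B.X ⊗ B.X) ⊗≫
        (A.X ⊗ A.X) ◁ B.mul ▷ B.X ⊗≫
        A.X ◁ (β_ A.X B.X).hom ▷ B.X ⊗≫ 𝟙 ((A.X ⊗ B.X) ⊗ (A.X ⊗ B.X)) := by
        rw [← braiding_naturality_right]; monoidal
    _ = 𝟙 ((A.X ⊗ B.X) ⊗ (A.X ⊗ B.X)) ⊗≫
        (A.X ⊗ B.X) ◁ A.comul ▷ B.X ⊗≫
        ((A.X ⊗ B.X) ⊗ (A.X ⊗ A.X)) ◁ B.comul ⊗≫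
        A.X ◁ ((β_ (A.X ⊗ A.X) B.X).inv ▷ (B.X ⊗ B.X)) ⊗≫
        A.mul ▷ (A.X ⊗ (B.X ⊗ (B.X ⊗ B.X))) ⊗≫
        (A.X ⊗ A.X) ◁ B.mul ▷ B.X ⊗≫
        A.X ◁ (β_ A.X B.X).hom ▷ B.X ⊗≫ 𝟙 ((A.X ⊗ B.X) ⊗ (A.X ⊗ B.X)) := by
        rw [← whisker_exchange, braiding_tensor_left_inv]; monoidal
    _ = 𝟙 ((A.X ⊗ B.X) ⊗ (A.X ⊗ B.X)) ⊗≫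
        (A.X ⊗ B.X) ◁ A.comul ▷ B.X ⊗≫
        A.X ◁ ((B.X ⊗ (A.X ⊗ A.X)) ◁ B.comul ≫ (β_ (A.X ⊗ A.X) B.X).inv ▷ (B.X ⊗ B.X)) ⊗≫
        A.mul ▷ (A.X ⊗ (B.X ⊗ (B.X ⊗ B.X))) ⊗≫
        (A.X ⊗ A.X) ◁ B.mul ▷ B.X ⊗≫
        A.X ◁ (β_ A.X B.X).hom ▷ B.X ⊗≫ 𝟙 ((A.X ⊗ B.X) ⊗ (A.X ⊗ B.X)) := by
        monoidal
    _ = 𝟙 ((A.X ⊗ B.X) ⊗ (A.X ⊗ B.X)) ⊗≫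
        A.X ◁ (B.X ◁ A.comul ≫ (β_ (A.X ⊗ A.X) B.X).inv) ▷ B.X ⊗≫
        ((A.X ⊗ (A.X ⊗ A.X)) ⊗ B.X) ◁ B.comul ⊗≫
        A.mul ▷ (A.X ⊗ (B.X ⊗ (B.X ⊗ B.X))) ⊗≫
        (A.X ⊗ A.X) ◁ B.mul ▷ B.X ⊗≫
        A.X ◁ (β_ A.X B.X).hom ▷ B.X ⊗≫ 𝟙 ((A.X ⊗ B.X) ⊗ (A.X ⊗ B.X)) := by
        rw [whisker_exchange]; monoidal
    _ = 𝟙 ((A.X ⊗ B.X) ⊗ (A.X ⊗ B.X)) ⊗≫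
        A.X ◁ (β_ A.X B.X).inv ▷ B.X ⊗≫
        A.X ◁ A.comul ▷ (B.X ⊗ B.X) ⊗≫
        ((A.X ⊗ (A.X ⊗ A.X)) ⊗ B.X) ◁ B.comul ⊗≫
        A.mul ▷ (A.X ⊗ (B.X ⊗ (B.X ⊗ B.X))) ⊗≫
        (A.X ⊗ A.X) ◁ B.mul ▷ B.X ⊗≫
        A.X ◁ (β_ A.X B.X).hom ▷ B.X ⊗≫ 𝟙 ((A.X ⊗ B.X) ⊗ (A.X ⊗ B.X)) := by
        rw [braiding_inv_naturality_right]; monoidal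
    _ = bpMul A B ≫ bpComul A B := by
        rw [bpMul_eq', bpComul_eq]
        slice_rhs 2 3 => rw [tensorHom_comp_tensorHom]
        rw [frobR A, frobR B, ← tensorHom_comp_tensorHom, ← tensorHom_comp_tensorHom]
        dsimp only [tensorμ, tensorδ]
        simp only [MonoidalCategory.tensorHom_def, Category.assoc]
        monoidal

end BraidedProductAux

open BraidedProductAux in
/-- The braided product `A ×⁺ B` of two Frobenius algebras (Q-systems) in a braided
monoidal category is again a Frobenius algebra: its multiplication is associative with
two-sided unit, its comultiplication is coassociative with counit, and the Frobenius
law holds. -/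
theorem braidedProduct_isFrobeniusAlgebra (A B : FrobeniusAlgebra C) :
    ((bpMul A B ⊗ₘ 𝟙 (A.X ⊗ B.X)) ≫ bpMul A B =
      (α_ (A.X ⊗ B.X) (A.X ⊗ B.X) (A.X ⊗ B.X)).hom ≫
        (𝟙 (A.X ⊗ B.X) ⊗ₘ bpMul A B) ≫ bpMul A B) ∧
    ((bpOne A B ⊗ₘ 𝟙 (A.X ⊗ B.X)) ≫ bpMul A B = (λ_ (A.X ⊗ B.X)).hom) ∧
    ((𝟙 (A.X ⊗ B.X) ⊗ₘ bpOne A B) ≫ bpMul A B = (ρ_ (A.X ⊗ B.X)).hom) ∧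
    (bpComul A B ≫ (bpComul A B ⊗ₘ 𝟙 (A.X ⊗ B.X)) ≫
        (α_ (A.X ⊗ B.X) (A.X ⊗ B.X) (A.X ⊗ B.X)).hom =
      bpComul A B ≫ (𝟙 (A.X ⊗ B.X) ⊗ₘ bpComul A B)) ∧
    (bpComul A B ≫ (bpCounit A B ⊗ₘ 𝟙 (A.X ⊗ B.X)) = (λ_ (A.X ⊗ B.X)).inv) ∧
    (bpComul A B ≫ (𝟙 (A.X ⊗ B.X) ⊗ₘ bpCounit A B) = (ρ_ (A.X ⊗ B.X)).inv) ∧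
    ((bpComul A B ⊗ₘ 𝟙 (A.X ⊗ B.X)) ≫
        (α_ (A.X ⊗ B.X) (A.X ⊗ B.X) (A.X ⊗ B.X)).hom ≫ (𝟙 (A.X ⊗ B.X) ⊗ₘ bpMul A B) =
      bpMul A B ≫ bpComul A B) ∧
    (bpMul A B ≫ bpComul A B =
      (𝟙 (A.X ⊗ B.X) ⊗ₘ bpComul A B) ≫
        (α_ (A.X ⊗ B.X) (A.X ⊗ B.X) (A.X ⊗ B.X)).inv ≫ (bpMul A B ⊗ₘ 𝟙 (A.X ⊗ B.X))) := by
  refine ⟨bp_mul_assoc A B, bp_one_mul A B, bp_mul_one A B, bp_comul_assoc A B,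
    bp_counit_comul A B, bp_comul_counit A B, ?_, ?_⟩
  · rw [tensorHom_id, id_tensorHom]; exact bp_frobenius_left A B
  · rw [id_tensorHom, tensorHom_id]; exact (bp_frobenius_right A B).symm
end

section
/- For Frobenius algebras A and B in a braided monoidal category and their braided product A ×⁺ B, the embeddings ι_A and ι_B are morphisms of monoid objects into the braided product: u_A ≫ ι_A = u_× and (ι_A ⊗ ι_A) ≫ m_× = m_A ≫ ι_A, and likewise u_B ≫ ι_B = u_× and (ι_B ⊗ ι_B) ≫ m_× = m_B ≫ ι_B. (This expresses that both factor Q-systems are intermediate Q-systems of their braided product.) -/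
open CategoryTheory MonoidalCategory

variable {C : Type*} [Category C] [MonoidalCategory C] [BraidedCategory C]

/-- The embedding `ι_A : A ⟶ A ⊗ B` of the first factor into the braided product. -/
noncomputable def bpIotaA (A B : FrobeniusAlgebra C) : A.X ⟶ A.X ⊗ B.X :=
  (ρ_ A.X).inv ≫ (𝟙 A.X ⊗ₘ B.one)

/-- The embedding `ι_B : B ⟶ A ⊗ B` of the second factor into the braided product. -/
noncomputable def bpIotaB (A B : FrobeniusAlgebra C) : B.X ⟶ A.X ⊗ B.X :=
  (λ_ B.X).inv ≫ (A.one ⊗ₘ 𝟙 B.X)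


omit [BraidedCategory C] in
lemma one_mul_w (B : FrobeniusAlgebra C) : B.one ▷ B.X ≫ B.mul = (λ_ B.X).hom := by
  have := B.one_mul'; simpa [MonoidalCategory.tensorHom_def] using this

omit [BraidedCategory C] in
lemma mul_one_w (B : FrobeniusAlgebra C) : B.X ◁ B.one ≫ B.mul = (ρ_ B.X).hom := by
  have := B.mul_one'; simpa [MonoidalCategory.tensorHom_def] using this

/-- The embeddings `ι_A` and `ι_B` are morphisms of monoid objects into the braided
product `A ×⁺ B`: both factor Q-systems are intermediate Q-systems of their braided
product. -/
theorem embeddings_are_monoid_morphisms (A B : FrobeniusAlgebra C) :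
    (A.one ≫ bpIotaA A B = bpOne A B) ∧
    ((bpIotaA A B ⊗ₘ bpIotaA A B) ≫ bpMul A B = A.mul ≫ bpIotaA A B) ∧
    (B.one ≫ bpIotaB A B = bpOne A B) ∧
    ((bpIotaB A B ⊗ₘ bpIotaB A B) ≫ bpMul A B = B.mul ≫ bpIotaB A B) := by
  refine ⟨?_, ?_, ?_, ?_⟩
  · simp [bpIotaA, bpOne, MonoidalCategory.tensorHom_def, MonoidalCategory.unitors_inv_equal]
  · simp [bpMul, bpIotaA, MonoidalCategory.tensorHom_def]
    slice_lhs 2 3 => rw [associator_inv_naturality_middle]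
    slice_lhs 3 4 => rw [rightUnitor_inv_naturality]
    slice_lhs 4 5 => rw [associator_naturality_left]
    slice_lhs 5 6 => rw [associator_naturality_middle]
    slice_lhs 6 9 =>
      rw [← MonoidalCategory.whiskerLeft_comp, ← MonoidalCategory.whiskerLeft_comp,
          ← MonoidalCategory.whiskerLeft_comp, ← whisker_exchange_assoc,
          associator_inv_naturality_left_assoc, ← comp_whiskerRight,
          BraidedCategory.braiding_inv_naturality_left, braiding_inv_tensorUnit_right]
    simp [whisker_exchange, one_mul_w, mul_one_w]
    slice_lhs 3 5 =>
      rw [← MonoidalCategory.whiskerLeft_comp, ← MonoidalCategory.whiskerLeft_comp,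
          ← MonoidalCategory.whiskerLeft_comp, ← MonoidalCategory.whiskerLeft_comp]
    simp only [Category.assoc]
    rw [associator_inv_naturality_right_assoc, associator_naturality_left_assoc, Iso.hom_inv_id_assoc,
        Iso.inv_hom_id_assoc, whisker_exchange_assoc, ← MonoidalCategory.whiskerLeft_comp]
    simp [one_mul_w]
  · simp [bpIotaB, bpOne, tensorHom_def']
  · simp [bpMul, bpIotaB, MonoidalCategory.tensorHom_def]
    slice_lhs 6 8 =>
      rw [← MonoidalCategory.whiskerLeft_comp, ← MonoidalCategory.whiskerLeft_comp,
          associator_inv_naturality_middle_assoc, ← comp_whiskerRight,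
          BraidedCategory.braiding_inv_naturality_right,
          braiding_inv_tensorUnit_left]
    simp [whisker_exchange, mul_one_w, one_mul_w]
    have h1 : A.X ◁ A.one ▷ B.X ▷ B.X ≫ (α_ A.X (A.X ⊗ B.X) B.X).inv ≫
        (α_ A.X A.X B.X).inv ▷ B.X ≫ A.mul ▷ B.X ▷ B.X =
        (α_ A.X (𝟙_ C ⊗ B.X) B.X).inv ≫ (α_ A.X (𝟙_ C) B.X).inv ▷ B.X ≫
          (ρ_ A.X).hom ▷ B.X ▷ B.X := by
      rw [← mul_one_w A, comp_whiskerRight, comp_whiskerRight]; monoidal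
    rw [reassoc_of% h1]
    have hR : B.mul ≫ (λ_ B.X).inv ≫ A.one ▷ B.X
        = (λ_ (B.X ⊗ B.X)).inv ≫ A.one ▷ (B.X ⊗ B.X) ≫ A.X ◁ B.mul := by
      rw [← whisker_exchange]; simp
    rw [hR, whiskerRight_tensor_symm]
    monoidal
end

section
/- For Frobenius algebras A and B in a braided monoidal category, the braiding β_{A,B} : A ⊗ B ⟶ B ⊗ A is an isomorphism of Frobenius algebras from the braided product A ×⁺ B to the opposite braided product B ×⁻ A: it intertwines the units (u_{×⁺} ≫ β_{A,B} = u_{×⁻}), the counits (β_{A,B} ≫ ε_{×⁻} = ε_{×⁺}), the multiplications ((β_{A,B} ⊗ β_{A,B}) ≫ m_{×⁻} = m_{×⁺} ≫ β_{A,B}), and the comultiplications (δ_{×⁺} ≫ (β_{A,B} ⊗ β_{A,B}) = β_{A,B} ≫ δ_{×⁻}). (This is the remark that A₁ ×⁺ A₂ is unitarily equivalent to A₂ ×⁻ A₁ via the braiding.) -/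
open CategoryTheory MonoidalCategory

variable {C : Type*} [Category C] [MonoidalCategory C] [BraidedCategory C]

/-- The multiplication of the opposite braided product `B ×⁻ A`: rebracket, apply
`id_B ⊗ β_{A,B} ⊗ id_A` to the middle factors `A ⊗ B`, rebracket, apply `m_B ⊗ m_A`. -/
noncomputable def bpMulNeg (A B : FrobeniusAlgebra C) :
    (B.X ⊗ A.X) ⊗ (B.X ⊗ A.X) ⟶ B.X ⊗ A.X :=
  (α_ B.X A.X (B.X ⊗ A.X)).hom ≫
    (B.X ◁ (α_ A.X B.X A.X).inv) ≫
    (B.X ◁ ((β_ A.X B.X).hom ▷ A.X)) ≫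
    (B.X ◁ (α_ B.X A.X A.X).hom) ≫
    (α_ B.X B.X (A.X ⊗ A.X)).inv ≫ (B.mul ⊗ₘ A.mul)

/-- The unit of the opposite braided product `B ×⁻ A`. -/
noncomputable def bpOneNeg (A B : FrobeniusAlgebra C) : 𝟙_ C ⟶ B.X ⊗ A.X :=
  (λ_ (𝟙_ C)).inv ≫ (B.one ⊗ₘ A.one)

/-- The comultiplication of the opposite braided product `B ×⁻ A`: apply `δ_B ⊗ δ_A`,
rebracket, apply `id_B ⊗ (β_{A,B})⁻¹ ⊗ id_A` to the middle factors `B ⊗ A`, rebracket. -/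
noncomputable def bpComulNeg (A B : FrobeniusAlgebra C) :
    B.X ⊗ A.X ⟶ (B.X ⊗ A.X) ⊗ (B.X ⊗ A.X) :=
  (B.comul ⊗ₘ A.comul) ≫
    (α_ B.X B.X (A.X ⊗ A.X)).hom ≫
    (B.X ◁ (α_ B.X A.X A.X).inv) ≫
    (B.X ◁ ((β_ A.X B.X).inv ▷ A.X)) ≫
    (B.X ◁ (α_ A.X B.X A.X).hom) ≫
    (α_ B.X A.X (B.X ⊗ A.X)).inv

/-- The counit of the opposite braided product `B ×⁻ A`. -/
noncomputable def bpCounitNeg (A B : FrobeniusAlgebra C) : B.X ⊗ A.X ⟶ 𝟙_ C :=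
  (B.counit ⊗ₘ A.counit) ≫ (λ_ (𝟙_ C)).hom


open BraidedCategory in
private lemma braid_key (X Y : C) : ((β_ X Y).hom ⊗ₘ (β_ X Y).hom) ≫ tensorμ Y X Y X =
    tensorδ X X Y Y ≫ (β_ (X ⊗ X) (Y ⊗ Y)).hom := by
  simp [tensorμ, tensorδ, MonoidalCategory.tensorHom_def]

open BraidedCategory in
private lemma braid_key' (X Y : C) : tensorμ X X Y Y ≫ ((β_ X Y).hom ⊗ₘ (β_ X Y).hom) =
    (β_ (X ⊗ X) (Y ⊗ Y)).hom ≫ tensorδ Y X Y X := by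
  have h := braid_key X Y
  have h2 : ((β_ X Y).hom ⊗ₘ (β_ X Y).hom) =
      tensorδ X X Y Y ≫ (β_ (X ⊗ X) (Y ⊗ Y)).hom ≫ tensorδ Y X Y X := by
    rw [← Category.assoc, ← h, Category.assoc, tensorμ_tensorδ, Category.comp_id]
  rw [h2, ← Category.assoc, ← Category.assoc, tensorμ_tensorδ, Category.id_comp]

private lemma bpMul_eq (A B : FrobeniusAlgebra C) :
    bpMul A B = tensorδ A.X A.X B.X B.X ≫ (A.mul ⊗ₘ B.mul) := by
  simp [bpMul, tensorδ]

private lemma bpMulNeg_eq (A B : FrobeniusAlgebra C) :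
    bpMulNeg A B = tensorμ B.X A.X B.X A.X ≫ (B.mul ⊗ₘ A.mul) := by
  simp [bpMulNeg, tensorμ]

private lemma bpComul_eq (A B : FrobeniusAlgebra C) :
    bpComul A B = (A.comul ⊗ₘ B.comul) ≫ tensorμ A.X A.X B.X B.X := by
  simp [bpComul, tensorμ]

private lemma bpComulNeg_eq (A B : FrobeniusAlgebra C) :
    bpComulNeg A B = (B.comul ⊗ₘ A.comul) ≫ tensorδ B.X A.X B.X A.X := by
  simp [bpComulNeg, tensorδ]

/-- The braiding `β_{A,B} : A ⊗ B ⟶ B ⊗ A` is an isomorphism of Frobenius algebras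
from the braided product `A ×⁺ B` to the opposite braided product `B ×⁻ A`: it
intertwines units, counits, multiplications and comultiplications. -/
theorem braiding_iso_braidedProduct_oppositeBraidedProduct (A B : FrobeniusAlgebra C) :
    (bpOne A B ≫ (β_ A.X B.X).hom = bpOneNeg A B) ∧
    ((β_ A.X B.X).hom ≫ bpCounitNeg A B = bpCounit A B) ∧
    (((β_ A.X B.X).hom ⊗ₘ (β_ A.X B.X).hom) ≫ bpMulNeg A B =
      bpMul A B ≫ (β_ A.X B.X).hom) ∧
    (bpComul A B ≫ ((β_ A.X B.X).hom ⊗ₘ (β_ A.X B.X).hom) =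
      (β_ A.X B.X).hom ≫ bpComulNeg A B) := by
  refine ⟨?_, ?_, ?_, ?_⟩
  · simp only [bpOne, bpOneNeg, Category.assoc, BraidedCategory.braiding_naturality]
    simp [← unitors_equal]
  · simp only [bpCounit, bpCounitNeg, ← Category.assoc]
    rw [show (β_ A.X B.X).hom ≫ (B.counit ⊗ₘ A.counit) =
      (A.counit ⊗ₘ B.counit) ≫ (β_ (𝟙_ C) (𝟙_ C)).hom from
      (BraidedCategory.braiding_naturality _ _).symm]
    simp [← unitors_equal]
  · rw [bpMul_eq, bpMulNeg_eq, ← Category.assoc, braid_key]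
    simp only [Category.assoc]
    rw [BraidedCategory.braiding_naturality]
  · rw [bpComul_eq, bpComulNeg_eq, Category.assoc, braid_key',
      ← Category.assoc, ← Category.assoc, BraidedCategory.braiding_naturality]
end

section
/- Let a₁ < b₁, c₁ < d₁ and a₂ < b₂, c₂ < d₂ be real numbers determining nonempty open double cones O₁ = O(a₁,b₁;c₁,d₁) and O₂ = O(a₂,b₂;c₂,d₂) in ℝ². If every point of O₁ is spacelike separated from every point of O₂, then either (b₁ ≤ a₂ and d₂ ≤ c₁), i.e. O₁ lies in the left spacelike complement of O₂, or (b₂ ≤ a₁ and d₁ ≤ c₂), i.e. O₂ lies in the left spacelike complement of O₁. Conversely, either of these two conditions implies that every point of O₁ is spacelike separated from every point of O₂. -/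
/-- Two points of two-dimensional Minkowski space `ℝ²` (coordinates `(t, x)`) are
spacelike separated iff `(t − t')² < (x − x')²`. -/
def Spacelike (p q : ℝ × ℝ) : Prop :=
  (p.1 - q.1) ^ 2 < (p.2 - q.2) ^ 2

/-- The open double cone `O(a,b;c,d) = {(t,x) : a < t+x < b, c < t−x < d}`. -/
def DoubleCone (a b c d : ℝ) : Set (ℝ × ℝ) :=
  {p | a < p.1 + p.2 ∧ p.1 + p.2 < b ∧ c < p.1 - p.2 ∧ p.1 - p.2 < d}

lemma mem_doubleCone_uv (a b c d u v : ℝ) (h1 : a < u) (h2 : u < b)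
    (h3 : c < v) (h4 : v < d) : ((u+v)/2, (u-v)/2) ∈ DoubleCone a b c d := by
  simp only [DoubleCone, Set.mem_setOf_eq]
  constructor; · linarith
  constructor; · linarith
  constructor; · linarith
  · linarith

/-- Two nonempty open double cones `O₁ = O(a₁,b₁;c₁,d₁)` and `O₂ = O(a₂,b₂;c₂,d₂)` in
two-dimensional Minkowski space are pointwise spacelike separated if and only if
either `O₁` lies in the left spacelike complement of `O₂` (`b₁ ≤ a₂` and `d₂ ≤ c₁`)
or `O₂` lies in the left spacelike complement of `O₁` (`b₂ ≤ a₁` and `d₁ ≤ c₂`). -/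
theorem doubleCones_spacelike_iff_left_or_right
    (a₁ b₁ c₁ d₁ a₂ b₂ c₂ d₂ : ℝ)
    (h₁ : a₁ < b₁) (h₁' : c₁ < d₁) (h₂ : a₂ < b₂) (h₂' : c₂ < d₂) :
    (∀ p ∈ DoubleCone a₁ b₁ c₁ d₁, ∀ q ∈ DoubleCone a₂ b₂ c₂ d₂, Spacelike p q) ↔
      ((b₁ ≤ a₂ ∧ d₂ ≤ c₁) ∨ (b₂ ≤ a₁ ∧ d₁ ≤ c₂)) := by
  constructor
  · intro h
    have key : ∀ u₁ v₁ u₂ v₂ : ℝ,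
        a₁ < u₁ → u₁ < b₁ → c₁ < v₁ → v₁ < d₁ →
        a₂ < u₂ → u₂ < b₂ → c₂ < v₂ → v₂ < d₂ →
        (u₁ - u₂) * (v₁ - v₂) < 0 := by
      intro u₁ v₁ u₂ v₂ hu1 hu1' hv1 hv1' hu2 hu2' hv2 hv2'
      have hs := h _ (mem_doubleCone_uv _ _ _ _ _ _ hu1 hu1' hv1 hv1')
        _ (mem_doubleCone_uv _ _ _ _ _ _ hu2 hu2' hv2 hv2')
      simp only [Spacelike] at hs
      nlinarith [hs]
    -- u-intervals are disjoint
    have hu : b₁ ≤ a₂ ∨ b₂ ≤ a₁ := by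
      by_contra hc
      push_neg at hc
      obtain ⟨hA, hB⟩ := hc
      set u := (max a₁ a₂ + min b₁ b₂) / 2 with hu
      have hm : max a₁ a₂ < min b₁ b₂ := by
        rcases max_cases a₁ a₂ with ⟨he, _⟩ | ⟨he, _⟩ <;>
          rcases min_cases b₁ b₂ with ⟨he', _⟩ | ⟨he', _⟩ <;> rw [he, he'] <;> linarith
      have h1 : a₁ < u := by have := le_max_left a₁ a₂; simp only [hu]; linarith
      have h2 : a₂ < u := by have := le_max_right a₁ a₂; simp only [hu]; linarith
      have h3 : u < b₁ := by have := min_le_left b₁ b₂; simp only [hu]; linarith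
      have h4 : u < b₂ := by have := min_le_right b₁ b₂; simp only [hu]; linarith
      have := key u ((c₁+d₁)/2) u ((c₂+d₂)/2) h1 h3 (by linarith) (by linarith)
        h2 h4 (by linarith) (by linarith)
      simp at this
    have hv : d₁ ≤ c₂ ∨ d₂ ≤ c₁ := by
      by_contra hc
      push_neg at hc
      obtain ⟨hA, hB⟩ := hc
      set v := (max c₁ c₂ + min d₁ d₂) / 2 with hv
      have hm : max c₁ c₂ < min d₁ d₂ := by
        rcases max_cases c₁ c₂ with ⟨he, _⟩ | ⟨he, _⟩ <;>
          rcases min_cases d₁ d₂ with ⟨he', _⟩ | ⟨he', _⟩ <;> rw [he, he'] <;> linarith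
      have h1 : c₁ < v := by have := le_max_left c₁ c₂; simp only [hv]; linarith
      have h2 : c₂ < v := by have := le_max_right c₁ c₂; simp only [hv]; linarith
      have h3 : v < d₁ := by have := min_le_left d₁ d₂; simp only [hv]; linarith
      have h4 : v < d₂ := by have := min_le_right d₁ d₂; simp only [hv]; linarith
      have := key ((a₁+b₁)/2) v ((a₂+b₂)/2) v (by linarith) (by linarith) h1 h3
        (by linarith) (by linarith) h2 h4
      simp at this
    rcases hu with hu | hu <;> rcases hv with hv | hv
    · -- b₁ ≤ a₂ and d₁ ≤ c₂ : contradiction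
      exfalso
      have := key ((a₁+b₁)/2) ((c₁+d₁)/2) ((a₂+b₂)/2) ((c₂+d₂)/2)
        (by linarith) (by linarith) (by linarith) (by linarith)
        (by linarith) (by linarith) (by linarith) (by linarith)
      nlinarith
    · exact Or.inl ⟨hu, hv⟩
    · exact Or.inr ⟨hu, hv⟩
    · -- b₂ ≤ a₁ and d₂ ≤ c₁ : contradiction
      exfalso
      have := key ((a₁+b₁)/2) ((c₁+d₁)/2) ((a₂+b₂)/2) ((c₂+d₂)/2)
        (by linarith) (by linarith) (by linarith) (by linarith)
        (by linarith) (by linarith) (by linarith) (by linarith)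
      nlinarith
  · rintro (⟨hb, hd⟩ | ⟨hb, hd⟩) p hp q hq <;>
      obtain ⟨hp1, hp2, hp3, hp4⟩ := hp <;>
      obtain ⟨hq1, hq2, hq3, hq4⟩ := hq <;>
      simp only [Spacelike]
    · nlinarith [mul_pos (show (0:ℝ) < q.1 + q.2 - (p.1 + p.2) by linarith)
          (show (0:ℝ) < p.1 - p.2 - (q.1 - q.2) by linarith)]
    · nlinarith [mul_pos (show (0:ℝ) < p.1 + p.2 - (q.1 + q.2) by linarith)
          (show (0:ℝ) < q.1 - q.2 - (p.1 - p.2) by linarith)]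
end

section
/- Let H be a complex Hilbert space and B an isotone assignment of subsets of the bounded operators on H to subsets of ℝ². For double cones O₁ = O(a₁,b₁;c₁,d₁) and O₂ = O(a₂,b₂;c₂,d₂), if b₁ ≤ a₂ and d₂ ≤ c₁ (i.e. O₁ lies in the left spacelike complement of O₂), or symmetrically b₂ ≤ a₁ and d₁ ≤ c₂, then every operator in B⁺_loc(O₁) commutes with every operator in B⁺_loc(O₂). In other words, the net O ↦ B⁺_loc(O) of relative commutants of nested wedge algebras is local. -/
/-- The left wedge of the double cone `O(a,b;c,d)`: `{(t,x) : t+x < a, t−x > d}`. -/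
def LeftWedge (a d : ℝ) : Set (ℝ × ℝ) :=
  {p | p.1 + p.2 < a ∧ p.1 - p.2 > d}

/-- The causal complement of the right wedge of the double cone `O(a,b;c,d)`:
`W_R' = {(t,x) : t+x < b, t−x > c}`. -/
def RightWedgeCompl (b c : ℝ) : Set (ℝ × ℝ) :=
  {p | p.1 + p.2 < b ∧ p.1 - p.2 > c}

/-- For an isotone net `B` on a Hilbert space `H` and a double cone `O = O(a,b;c,d)`,
the maximal relatively local subnet algebra
`B⁺_loc(O) := centralizer(B(W_L)) ∩ B(W_R')`. -/
def BlocPlus {H : Type*} [NormedAddCommGroup H] [InnerProductSpace ℂ H]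
    (B : Set (ℝ × ℝ) → Set (H →L[ℂ] H)) (a b c d : ℝ) : Set (H →L[ℂ] H) :=
  Set.centralizer (B (LeftWedge a d)) ∩ B (RightWedgeCompl b c)

/-- For an isotone net `B` of sets of bounded operators on a complex Hilbert space, if
the double cone `O₁` lies in the left spacelike complement of `O₂` (or symmetrically),
then every operator in `B⁺_loc(O₁)` commutes with every operator in `B⁺_loc(O₂)`:
the net `O ↦ B⁺_loc(O)` of relative commutants of nested wedge algebras is local. -/
theorem BlocPlus_local {H : Type*} [NormedAddCommGroup H] [InnerProductSpace ℂ H]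
    [CompleteSpace H]
    (B : Set (ℝ × ℝ) → Set (H →L[ℂ] H))
    (isotone : ∀ S S' : Set (ℝ × ℝ), S ⊆ S' → B S ⊆ B S')
    (a₁ b₁ c₁ d₁ a₂ b₂ c₂ d₂ : ℝ)
    (h₁ : a₁ < b₁) (h₁' : c₁ < d₁) (h₂ : a₂ < b₂) (h₂' : c₂ < d₂)
    (hsep : (b₁ ≤ a₂ ∧ d₂ ≤ c₁) ∨ (b₂ ≤ a₁ ∧ d₁ ≤ c₂)) :
    ∀ x ∈ BlocPlus B a₁ b₁ c₁ d₁, ∀ y ∈ BlocPlus B a₂ b₂ c₂ d₂, x * y = y * x := by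
  rintro x ⟨hxc, hxw⟩ y ⟨hyc, hyw⟩
  rcases hsep with ⟨hb, hd⟩ | ⟨hb, hd⟩
  · -- RightWedgeCompl b₁ c₁ ⊆ LeftWedge a₂ d₂
    have hsub : RightWedgeCompl b₁ c₁ ⊆ LeftWedge a₂ d₂ := by
      rintro p ⟨h1, h2⟩
      exact ⟨h1.trans_le hb, lt_of_le_of_lt hd h2⟩
    exact hyc x (isotone _ _ hsub hxw)
  · have hsub : RightWedgeCompl b₂ c₂ ⊆ LeftWedge a₁ d₁ := by
      rintro p ⟨h1, h2⟩
      exact ⟨h1.trans_le hb, lt_of_le_of_lt hd h2⟩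
    exact (hxc y (isotone _ _ hsub hyw)).symm
end

section
/- Let M, K, T be finite index types, S : Matrix M T ℂ a unitary matrix (Sᴴ S = 1 and S Sᴴ = 1), S' : Matrix K T ℂ, and k₀ ∈ K a distinguished index such that S'_{k₀,t} ≠ 0 for all t ∈ T. Define fusion coefficients N(k)_{m₁,m₃} := Σ_{t ∈ T} S_{m₁,t} · S'_{k,t} · conj(S_{m₃,t}) / S'_{k₀,t} (the generalized Verlinde formula). Then the unitary matrix S diagonalizes the fusion coefficients: for all k ∈ K and t, t' ∈ T, Σ_{m₁,m₃ ∈ M} conj(S_{m₁,t}) · N(k)_{m₁,m₃} · S_{m₃,t'} equals S'_{k,t}/S'_{k₀,t} if t = t' and equals 0 if t ≠ t'. -/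
open scoped Matrix ComplexConjugate

/-- Generalized Verlinde formula / diagonalization of the bimodule fusion rules.
Let `M`, `K`, `T` be finite index types (`M` indexing irreducible `A`-`B`-bimodules,
`K` the irreducible `B`-`B`-bimodules with distinguished element `k₀` the trivial
bimodule, and `T` the pairs of charged fields), `S : Matrix M T ℂ` unitary,
`S' : Matrix K T ℂ` with `S' k₀ t ≠ 0` for all `t`.  Define the fusion coefficients
`N(k)_{m₁,m₃} := Σ_t S_{m₁,t} S'_{k,t} conj(S_{m₃,t}) / S'_{k₀,t}`.  Then `S`
diagonalizes them:
`Σ_{m₁,m₃} conj(S_{m₁,t}) N(k)_{m₁,m₃} S_{m₃,t'} = δ_{t,t'} · S'_{k,t}/S'_{k₀,t}`. -/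
theorem generalized_verlinde_diagonalization
    {M K T : Type*} [Fintype M] [Fintype K] [Fintype T]
    [DecidableEq M] [DecidableEq T]
    (S : Matrix M T ℂ) (hS₁ : Sᴴ * S = 1) (hS₂ : S * Sᴴ = 1)
    (S' : Matrix K T ℂ) (k₀ : K) (hk₀ : ∀ t : T, S' k₀ t ≠ 0)
    (N : K → M → M → ℂ)
    (hN : ∀ (k : K) (m₁ m₃ : M),
      N k m₁ m₃ = ∑ t : T, S m₁ t * S' k t * conj (S m₃ t) / S' k₀ t) :
    ∀ (k : K) (t t' : T),
      (∑ m₁ : M, ∑ m₃ : M, conj (S m₁ t) * N k m₁ m₃ * S m₃ t') =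
        if t = t' then S' k t / S' k₀ t else 0 := by
  intro k t t'
  have key : ∀ a b : T, (∑ m : M, conj (S m a) * S m b) = if a = b then 1 else 0 := by
    intro a b
    have h := congrFun (congrFun hS₁ a) b
    simpa [Matrix.mul_apply, Matrix.one_apply, Matrix.conjTranspose_apply] using h
  calc (∑ m₁ : M, ∑ m₃ : M, conj (S m₁ t) * N k m₁ m₃ * S m₃ t')
      = ∑ s : T, (∑ m₁ : M, conj (S m₁ t) * S m₁ s) * (S' k s / S' k₀ s) *
          (∑ m₃ : M, conj (S m₃ s) * S m₃ t') := by
        simp only [hN, Finset.mul_sum, Finset.sum_mul, Finset.sum_div]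
        conv_lhs => enter [2, m₁]; rw [Finset.sum_comm]
        rw [Finset.sum_comm]
        refine Finset.sum_congr rfl fun s _ => ?_
        rw [Finset.sum_comm]
        refine Finset.sum_congr rfl fun m₁ _ => Finset.sum_congr rfl fun m₃ _ => ?_
        ring
    _ = ∑ s : T, (if t = s then 1 else 0) * (S' k s / S' k₀ s) *
          (if s = t' then 1 else 0) := by
        refine Finset.sum_congr rfl fun s _ => ?_
        rw [key t s, key s t']
    _ = if t = t' then S' k t / S' k₀ t else 0 := by
        simp [Finset.sum_ite_eq, eq_comm]
        split_ifs with h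
        · subst h; simp
        · simp [h]
end
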